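/- Let α satisfy φ < α < 2, where φ = (1 + √5)/2 is the golden ratio, and let n₁, n₂, m₁, m₂ be positive integers with (α − 1)·n₂ ≤ n₁. Then G_α(n₁, m₁) + H_α(n₂, m₂) + n₁ + n₂ ≤ H_α(n₁ + n₂, m₁ + m₂), where G_α(n, m) = n·(d_α − 1 + c_α·log₂ m) and H_α(n, m) = n·(d_α + c_α·log₂ m). -/

import Mathlib

set_option maxHeartbeats 800000

open Real

/-- The constant `c_α = (α+1)/((α+1)·log₂(α+1) − α·log₂ α)`. -/
noncomputable def cA (α : ℝ) : ℝ :=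
  (α + 1) / ((α + 1) * logb 2 (α + 1) - α * logb 2 α)

/-- `k₀(α)` is the least `ℓ ∈ ℕ` such that `(α² − α − 1)/(α − 1) ≥ α^(−ℓ)`. -/
noncomputable def k0 (α : ℝ) : ℕ :=
  sInf {ℓ : ℕ | (α ^ 2 - α - 1) / (α - 1) ≥ α ^ (-(ℓ : ℝ))}

/-- The constant `d_α = 2^(k₀(α)+1)·max{k₀(α)+1, 3}·(2α − 1)/(α − 1) + 1`. -/
noncomputable def dA (α : ℝ) : ℝ :=
  2 ^ (k0 α + 1) * max ((k0 α : ℝ) + 1) 3 * (2 * α - 1) / (α - 1) + 1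

/-- `G_α(n, m) = n·(d_α − 1 + c_α·log₂ m)`. -/
noncomputable def G (α : ℝ) (n m : ℕ) : ℝ := (n : ℝ) * (dA α - 1 + cA α * logb 2 m)

/-- `H_α(n, m) = n·(d_α + c_α·log₂ m)`. -/
noncomputable def H (α : ℝ) (n m : ℕ) : ℝ := (n : ℝ) * (dA α + cA α * logb 2 m)

private lemma F_hasDeriv (x : ℝ) (hx : 0 < x) :
    HasDerivAt (fun y : ℝ => (y+1) * Real.log (y+1) - y * Real.log y)
      (Real.log (x+1) - Real.log x) x := by
  have h1 : HasDerivAt (fun y : ℝ => (y+1) * Real.log (y+1)) (Real.log (x+1) + 1) x := by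
    have := (Real.hasDerivAt_mul_log (x := x+1) (by linarith)).comp x
      ((hasDerivAt_id x).add_const 1)
    simpa [Function.comp_def] using this
  have h2 : HasDerivAt (fun y : ℝ => y * Real.log y) (Real.log x + 1) x :=
    Real.hasDerivAt_mul_log (ne_of_gt hx)
  have h3 := h1.sub h2
  rw [show Real.log (x+1) + 1 - (Real.log x + 1) = Real.log (x+1) - Real.log x by ring] at h3
  exact h3

private lemma F_mono {a t : ℝ} (ha : 0 < a) (hat : a ≤ t) :
    (a+1) * Real.log (a+1) - a * Real.log a ≤ (t+1) * Real.log (t+1) - t * Real.log t := by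
  have H : MonotoneOn (fun y : ℝ => (y+1) * Real.log (y+1) - y * Real.log y) (Set.Ici a) := by
    apply monotoneOn_of_deriv_nonneg (convex_Ici a)
    · intro x hx
      exact (F_hasDeriv x (lt_of_lt_of_le ha hx)).continuousAt.continuousWithinAt
    · intro x hx
      rw [interior_Ici] at hx
      exact (F_hasDeriv x (ha.trans hx)).differentiableAt.differentiableWithinAt
    · intro x hx
      rw [interior_Ici] at hx
      have hx0 : 0 < x := ha.trans hx
      rw [(F_hasDeriv x hx0).deriv]
      have := Real.log_le_log hx0 (by linarith : x ≤ x + 1)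
      linarith
  exact H Set.self_mem_Ici (Set.mem_Ici.2 hat) hat

private lemma stepA {p q u v : ℝ} (hp : 0 < p) (hq : 0 < q) (hu : 0 < u) (hv : 0 < v) :
    p * Real.log u + q * Real.log v
      + p * Real.log (p+q) - p * Real.log p + q * Real.log (p+q) - q * Real.log q
      ≤ (p+q) * Real.log (u+v) := by
  have hS : 0 < u + v := by linarith
  have hT : 0 < p + q := by linarith
  have e1 : Real.log (u*(p+q)/(p*(u+v)))
      = Real.log u + Real.log (p+q) - Real.log p - Real.log (u+v) := by
    rw [Real.log_div (by positivity) (by positivity), Real.log_mul hu.ne' hT.ne',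
      Real.log_mul hp.ne' hS.ne']
    ring
  have e2 : Real.log (v*(p+q)/(q*(u+v)))
      = Real.log v + Real.log (p+q) - Real.log q - Real.log (u+v) := by
    rw [Real.log_div (by positivity) (by positivity), Real.log_mul hv.ne' hT.ne',
      Real.log_mul hq.ne' hS.ne']
    ring
  have k1 := Real.log_le_sub_one_of_pos (show 0 < u*(p+q)/(p*(u+v)) by positivity)
  have k2 := Real.log_le_sub_one_of_pos (show 0 < v*(p+q)/(q*(u+v)) by positivity)
  rw [e1] at k1
  rw [e2] at k2
  have m1 := mul_le_mul_of_nonneg_left k1 (le_of_lt (mul_pos hp hS))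
  have m2 := mul_le_mul_of_nonneg_left k2 (le_of_lt (mul_pos hq hS))
  have c1 : p*(u+v) * (u*(p+q)/(p*(u+v)) - 1) = u*(p+q) - p*(u+v) := by
    field_simp
  have c2 : q*(u+v) * (v*(p+q)/(q*(u+v)) - 1) = v*(p+q) - q*(u+v) := by
    field_simp
  rw [c1] at m1
  rw [c2] at m2
  have hsum : (u+v) * (p * Real.log u + q * Real.log v
      + p * Real.log (p+q) - p * Real.log p + q * Real.log (p+q) - q * Real.log q
      - (p+q) * Real.log (u+v)) ≤ 0 := by nlinarith [m1, m2]
  nlinarith [hsum, hS]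

private lemma Ppoly_aux {α : ℝ} (h1 : 1.618 < α) (h2 : α < 2) :
    0 ≤ (α+2)*((3/2)*α - 33/20) - (α^2-1)*((33/20)*(α-1)-3/2)
      - (α+1)*((α+1)/(271/100)) := by
  have g3 : (0:ℝ) ≤ (α - 1.618)*(2 - α) := by nlinarith
  have g1 : (0:ℝ) ≤ (α - 1.618)*((α - 1.618)*(2 - α)) :=
    mul_nonneg (by linarith) g3
  nlinarith [g3, g1]

private lemma stepC {α : ℝ} (hαa : α + 1 < α^2) (hα1 : 1.618 < α) (hα2 : α < 2) :
    (α+1) * Real.log (α+1) - α * Real.log α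
      ≤ (α+1) * (α * Real.log α - (α-1) * Real.log (α-1)) := by
  set s : ℝ := Real.exp (1/2) with hs_def
  have hs_sq : s * s = Real.exp 1 := by
    rw [hs_def, ← Real.exp_add]; norm_num
  have hs_pos : 0 < s := Real.exp_pos _
  have he_lt : Real.exp 1 < 2.7182818286 := Real.exp_one_lt_d9
  have he_gt : (271/100 : ℝ) < Real.exp 1 :=
    lt_trans (by norm_num) Real.exp_one_gt_d9
  have hs_lt : s < 33/20 := by nlinarith
  have hα0 : 0 < α := by linarith
  have hαm : 0 < α - 1 := by linarith
  have hαp : 0 < α + 1 := by linarith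
  have hA : (3/2) * α - s ≤ α * Real.log α := by
    have h := Real.log_le_sub_one_of_pos (show 0 < s/α by positivity)
    rw [Real.log_div hs_pos.ne' hα0.ne', hs_def, Real.log_exp] at h
    have h2 := mul_le_mul_of_nonneg_left h hα0.le
    have hc : α * (s/α) = s := by field_simp
    nlinarith [h2]
  have hB : Real.log (α-1) ≤ s * (α-1) - 3/2 := by
    have h := Real.log_le_sub_one_of_pos (show 0 < s*(α-1) by positivity)
    rw [Real.log_mul hs_pos.ne' hαm.ne', hs_def, Real.log_exp] at h
    linarith
  have hC : Real.log (α+1) ≤ (α+1) / (271/100) := by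
    have h := Real.log_le_sub_one_of_pos (show 0 < (α+1)/Real.exp 1 by positivity)
    rw [Real.log_div hαp.ne' (Real.exp_pos 1).ne', Real.log_exp] at h
    have h2 : (α+1)/Real.exp 1 ≤ (α+1)/(271/100) :=
      div_le_div_of_nonneg_left hαp.le (by norm_num) he_gt.le
    linarith
  have P1 : (α+2)*((3/2)*α - s) ≤ (α+2)*(α*Real.log α) :=
    mul_le_mul_of_nonneg_left hA (by linarith)
  have P2 : (α^2-1)*Real.log (α-1) ≤ (α^2-1)*(s*(α-1)-3/2) :=
    mul_le_mul_of_nonneg_left hB (by nlinarith)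
  have P3 : (α+1)*Real.log (α+1) ≤ (α+1)*((α+1)/(271/100)) :=
    mul_le_mul_of_nonneg_left hC (by linarith)
  have hsub : (α+2)*((3/2)*α - 33/20) - (α^2-1)*((33/20)*(α-1)-3/2)
      ≤ (α+2)*((3/2)*α - s) - (α^2-1)*(s*(α-1)-3/2) := by
    nlinarith [mul_nonneg (by linarith : (0:ℝ) ≤ 33/20 - s)
      (by nlinarith : (0:ℝ) ≤ (α+2) + (α^2-1)*(α-1))]
  have Ppoly := Ppoly_aux hα1 hα2
  linarith [P1, P2, P3, hsub, Ppoly]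

/-- Lemma 17(a): for `φ < α < 2`, if `(α−1)·n₂ ≤ n₁` then
`G_α(n₁,m₁) + H_α(n₂,m₂) + n₁ + n₂ ≤ H_α(n₁+n₂, m₁+m₂)`. -/
theorem GHalpha_bound_a (α : ℝ) (hφ : (1 + Real.sqrt 5) / 2 < α) (hα2 : α < 2)
    (n₁ n₂ m₁ m₂ : ℕ) (hn₁ : 0 < n₁) (hn₂ : 0 < n₂) (hm₁ : 0 < m₁) (hm₂ : 0 < m₂)
    (h : (α - 1) * n₂ ≤ (n₁ : ℝ)) :
    G α n₁ m₁ + H α n₂ m₂ + n₁ + n₂ ≤ H α (n₁ + n₂) (m₁ + m₂) := by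
  have h5 : Real.sqrt 5 ^ 2 = 5 := Real.sq_sqrt (by norm_num)
  have h5n : (0:ℝ) ≤ Real.sqrt 5 := Real.sqrt_nonneg 5
  have hs5 : (2.236 : ℝ) < Real.sqrt 5 := by
    nlinarith [h5, h5n]
  have hα1 : (1.618 : ℝ) < α := by linarith
  have hαa : α + 1 < α ^ 2 := by nlinarith [h5, h5n]
  have hα0 : (0:ℝ) < α := by linarith
  have hαm : (0:ℝ) < α - 1 := by linarith
  have hαp : (0:ℝ) < α + 1 := by linarith
  -- casts
  have hp : (0:ℝ) < (n₁:ℝ) := by exact_mod_cast hn₁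
  have hq : (0:ℝ) < (n₂:ℝ) := by exact_mod_cast hn₂
  have hu : (0:ℝ) < (m₁:ℝ) := by exact_mod_cast hm₁
  have hv : (0:ℝ) < (m₂:ℝ) := by exact_mod_cast hm₂
  have hb : (0:ℝ) < Real.log 2 := Real.log_pos (by norm_num)
  -- denominator of cA
  set D : ℝ := (α+1) * Real.log (α+1) - α * Real.log α with hD_def
  have hD : 0 < D := by
    have l1 : 0 < Real.log α := Real.log_pos (by linarith)
    have l2 : Real.log α < Real.log (α+1) := Real.log_lt_log hα0 (by linarith)
    nlinarith [l1, l2]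
  have hcA : cA α = (α+1) * Real.log 2 / D := by
    unfold cA
    rw [Real.logb, Real.logb]
    rw [show (α+1) * (Real.log (α+1) / Real.log 2) - α * (Real.log α / Real.log 2)
        = D / Real.log 2 by rw [hD_def]; ring]
    field_simp
  have hcA_pos : 0 < cA α := by
    rw [hcA]; positivity
  -- step A in natural logs
  have HA := stepA hp hq hu hv
  -- step B : monotonicity
  set t : ℝ := (n₁:ℝ) / (n₂:ℝ) with ht_def
  have ht : α - 1 ≤ t := by
    rw [ht_def, le_div_iff₀ hq]
    linarith
  have htpos : 0 < t := lt_of_lt_of_le hαm ht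
  have hFm := F_mono hαm ht
  -- identities for log t, log (t+1)
  have ht1 : Real.log (t+1) = Real.log ((n₁:ℝ)+(n₂:ℝ)) - Real.log (n₂:ℝ) := by
    rw [show t + 1 = ((n₁:ℝ)+(n₂:ℝ))/(n₂:ℝ) by rw [ht_def]; field_simp,
      Real.log_div (by positivity) hq.ne']
  have ht2 : Real.log t = Real.log (n₁:ℝ) - Real.log (n₂:ℝ) := by
    rw [ht_def, Real.log_div hp.ne' hq.ne']
  have hW : (n₂:ℝ) * ((t+1) * Real.log (t+1) - t * Real.log t)
      = (n₁:ℝ) * Real.log ((n₁:ℝ)+(n₂:ℝ)) - (n₁:ℝ) * Real.log (n₁:ℝ)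
        + (n₂:ℝ) * Real.log ((n₁:ℝ)+(n₂:ℝ)) - (n₂:ℝ) * Real.log (n₂:ℝ) := by
    rw [ht1, ht2, ht_def]
    field_simp
    ring
  -- step C, with α − 1 + 1 = α rewritten
  have hsc := stepC hαa hα1 hα2
  have hFa : D ≤ (α+1) * ((α-1+1) * Real.log (α-1+1) - (α-1) * Real.log (α-1)) := by
    rw [show α - 1 + 1 = α by ring]
    rw [hD_def]; linarith
  -- combine: n₂ * D ≤ (α+1) * Y
  set Y : ℝ := ((n₁:ℝ)+(n₂:ℝ)) * Real.log ((m₁:ℝ)+(m₂:ℝ))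
      - (n₁:ℝ) * Real.log (m₁:ℝ) - (n₂:ℝ) * Real.log (m₂:ℝ) with hY_def
  have hYW : (n₂:ℝ) * ((t+1) * Real.log (t+1) - t * Real.log t) ≤ Y := by
    rw [hW, hY_def]; linarith [HA]
  have hkey : (n₂:ℝ) * D ≤ (α+1) * Y := by
    have s1 : (n₂:ℝ) * D ≤ (n₂:ℝ) * ((α+1) * ((α-1+1) * Real.log (α-1+1) - (α-1) * Real.log (α-1))) :=
      mul_le_mul_of_nonneg_left hFa hq.le
    have s2 : (n₂:ℝ) * ((α-1+1) * Real.log (α-1+1) - (α-1) * Real.log (α-1))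
        ≤ (n₂:ℝ) * ((t+1) * Real.log (t+1) - t * Real.log t) :=
      mul_le_mul_of_nonneg_left hFm hq.le
    nlinarith [s1, s2, hYW, hαp, hq]
  -- convert to logb and finish
  have hlogb : ∀ x : ℕ, Real.logb 2 (x:ℝ) = Real.log (x:ℝ) / Real.log 2 := fun x => rfl
  have hfin : (n₂:ℝ) ≤ cA α * (((n₁:ℝ)+(n₂:ℝ)) * Real.logb 2 ((m₁:ℝ)+(m₂:ℝ))
      - (n₁:ℝ) * Real.logb 2 (m₁:ℝ) - (n₂:ℝ) * Real.logb 2 (m₂:ℝ)) := by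
    rw [hcA]
    rw [show ((n₁:ℝ)+(n₂:ℝ)) * Real.logb 2 ((m₁:ℝ)+(m₂:ℝ))
        - (n₁:ℝ) * Real.logb 2 (m₁:ℝ) - (n₂:ℝ) * Real.logb 2 (m₂:ℝ)
        = Y / Real.log 2 by rw [hY_def, Real.logb, Real.logb, Real.logb]; ring]
    rw [show (α+1) * Real.log 2 / D * (Y / Real.log 2) = (α+1) * Y / D by
      field_simp]
    rw [le_div_iff₀ hD]
    linarith [hkey]
  -- unfold and conclude
  unfold G H
  push_cast
  linarith [hfin]
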